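/- There are exactly 13 equivalence classes of binary 3×16 matrices A = (A_1, A_2) such that A_1, A_2 are 3-bit Gray codes, the last column of A_1 equals the first column of A_2, and the multiset of row transition counts of A is {5,5,4}. -/

import Mathlib

/-- A 3-bit Gray code: a `3 × 8` binary matrix whose columns list all vectors of
`{0,1}^3`, with consecutive columns differing in exactly one bit. -/
def IsGrayCode3 (M : Fin 3 → Fin 8 → Bool) : Prop :=
  Function.Bijective (fun s : Fin 8 => fun r : Fin 3 => M r s) ∧
  ∀ s : Fin 7,
    (Finset.univ.filter fun r : Fin 3 => M r s.castSucc ≠ M r s.succ).card = 1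

/-- The `i`-th `3 × 8` block (`i = 0, 1`) of a `3 × 16` binary matrix. -/
def block3 (A : Fin 3 → Fin 16 → Bool) (i : Fin 2) : Fin 3 → Fin 8 → Bool :=
  fun r s => A r ⟨8 * i.val + s.val, by have := i.isLt; have := s.isLt; omega⟩

/-- The transition count of row `r` of a `3 × 16` matrix: the number of pairs of
consecutive columns at which the row entries differ (no wrap-around). -/
def rowTrans16 (A : Fin 3 → Fin 16 → Bool) (r : Fin 3) : ℕ :=
  (Finset.univ.filter fun p : Fin 16 × Fin 16 =>
    (p.2 : ℕ) = (p.1 : ℕ) + 1 ∧ A r p.1 ≠ A r p.2).card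

/-- The admissible matrices `A = (A₁, A₂)`: both blocks are 3-bit Gray codes, the
last column of `A₁` equals the first column of `A₂`, and the multiset of row
transition counts is `{5,5,4}`. -/
def IsAdmissible (A : Fin 3 → Fin 16 → Bool) : Prop :=
  (∀ i : Fin 2, IsGrayCode3 (block3 A i)) ∧
  (∀ r : Fin 3, A r 7 = A r 8) ∧
  Multiset.map (rowTrans16 A) Finset.univ.val = ({5, 5, 4} : Multiset ℕ)

/-- Equivalence: row permutations and/or complementing all bits in some rows. -/
def MatEquiv (A B : Fin 3 → Fin 16 → Bool) : Prop :=
  ∃ (π : Equiv.Perm (Fin 3)) (ε : Fin 3 → Bool),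
    ∀ r s, B r s = xor (ε r) (A (π r) s)

instance : DecidablePred IsAdmissible := fun A => by
  unfold IsAdmissible IsGrayCode3; infer_instance

instance (A B : Fin 3 → Fin 16 → Bool) : Decidable (MatEquiv A B) := by
  unfold MatEquiv; infer_instance

def pathN (v : Fin 3 → Bool) (d : ℕ → Fin 3) : ℕ → Fin 3 → Bool
  | 0 => v
  | n+1 => fun r => if r = d n then !(pathN v d n r) else pathN v d n r

def ext7 (d : Fin 7 → Fin 3) (n : ℕ) : Fin 3 := if h : n < 7 then d ⟨n, h⟩ else 0

def z3 : Fin 3 → Bool := fun _ => false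

def col1 (d : Fin 7 → Fin 3) (s : Fin 8) : Fin 3 → Bool := pathN z3 (ext7 d) s.val

def build (d e : Fin 7 → Fin 3) : Fin 3 → Fin 16 → Bool :=
  fun r s => if s.val < 8 then pathN z3 (ext7 d) s.val r
             else pathN (pathN z3 (ext7 d) 7) (ext7 e) (s.val - 8) r

def Dlit : Finset (Fin 7 → Fin 3) :=
  {![0,1,0,2,0,1,0], ![0,1,0,2,1,0,1], ![0,1,2,1,0,1,2], ![0,2,0,1,0,2,0],
   ![0,2,0,1,2,0,2], ![0,2,1,2,0,2,1], ![1,0,1,2,0,1,0], ![1,0,1,2,1,0,1],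
   ![1,0,2,0,1,0,2], ![1,2,0,2,1,2,0], ![1,2,1,0,1,2,1], ![1,2,1,0,2,1,2],
   ![2,0,1,0,2,0,1], ![2,0,2,1,0,2,0], ![2,0,2,1,2,0,2], ![2,1,0,1,2,1,0],
   ![2,1,2,0,1,2,1], ![2,1,2,0,2,1,2]}

def nm (a b c : ℕ) : Fin 3 → Fin 16 → Bool := fun r s => Nat.testBit (![a,b,c] r) s.val

def R : Finset (Fin 3 → Fin 16 → Bool) :=
  {nm 61542 50748 25584, nm 61542 39996 14832, nm 61542 15420 39408,
   nm 57798 34716 13296, nm 34758 57756 13296, nm 50118 3996 39408,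
   nm 4038 50076 39408, nm 50718 4044 40056, nm 7710 34764 52344,
   nm 52254 57804 30840, nm 30750 57804 52344, nm 52254 34764 7800,
   nm 39966 4044 50808}

attribute [local instance 2000] Finset.decidableDforallFinset
set_option maxRecDepth 1000000 in
set_option maxHeartbeats 10000000 in
set_option maxRecDepth 1000000 in
set_option maxHeartbeats 10000000 in
theorem LA00 : ∀ c d e f g : Fin 3,
    Function.Injective (col1 ![0,0,c,d,e,f,g]) → ![0,0,c,d,e,f,g] ∈ Dlit := by decide
set_option maxRecDepth 1000000 in
set_option maxHeartbeats 10000000 in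
theorem LA01 : ∀ c d e f g : Fin 3,
    Function.Injective (col1 ![0,1,c,d,e,f,g]) → ![0,1,c,d,e,f,g] ∈ Dlit := by decide
set_option maxRecDepth 1000000 in
set_option maxHeartbeats 10000000 in
theorem LA02 : ∀ c d e f g : Fin 3,
    Function.Injective (col1 ![0,2,c,d,e,f,g]) → ![0,2,c,d,e,f,g] ∈ Dlit := by decide
set_option maxRecDepth 1000000 in
set_option maxHeartbeats 10000000 in
theorem LA10 : ∀ c d e f g : Fin 3,
    Function.Injective (col1 ![1,0,c,d,e,f,g]) → ![1,0,c,d,e,f,g] ∈ Dlit := by decide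
set_option maxRecDepth 1000000 in
set_option maxHeartbeats 10000000 in
theorem LA11 : ∀ c d e f g : Fin 3,
    Function.Injective (col1 ![1,1,c,d,e,f,g]) → ![1,1,c,d,e,f,g] ∈ Dlit := by decide
set_option maxRecDepth 1000000 in
set_option maxHeartbeats 10000000 in
theorem LA12 : ∀ c d e f g : Fin 3,
    Function.Injective (col1 ![1,2,c,d,e,f,g]) → ![1,2,c,d,e,f,g] ∈ Dlit := by decide
set_option maxRecDepth 1000000 in
set_option maxHeartbeats 10000000 in
theorem LA20 : ∀ c d e f g : Fin 3,
    Function.Injective (col1 ![2,0,c,d,e,f,g]) → ![2,0,c,d,e,f,g] ∈ Dlit := by decide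
set_option maxRecDepth 1000000 in
set_option maxHeartbeats 10000000 in
theorem LA21 : ∀ c d e f g : Fin 3,
    Function.Injective (col1 ![2,1,c,d,e,f,g]) → ![2,1,c,d,e,f,g] ∈ Dlit := by decide
set_option maxRecDepth 1000000 in
set_option maxHeartbeats 10000000 in
theorem LA22 : ∀ c d e f g : Fin 3,
    Function.Injective (col1 ![2,2,c,d,e,f,g]) → ![2,2,c,d,e,f,g] ∈ Dlit := by decide

theorem LA : ∀ a b c d e f g : Fin 3,
    Function.Injective (col1 ![a,b,c,d,e,f,g]) → ![a,b,c,d,e,f,g] ∈ Dlit := by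
  intro a b
  fin_cases a <;> fin_cases b
  exacts [LA00, LA01, LA02, LA10, LA11, LA12, LA20, LA21, LA22]
set_option maxRecDepth 1000000 in
set_option maxHeartbeats 10000000 in
theorem LB0 : ∀ e ∈ Dlit, IsAdmissible (build ![0,1,0,2,0,1,0] e) → ∃ B ∈ R, MatEquiv (build ![0,1,0,2,0,1,0] e) B := by decide
set_option maxRecDepth 1000000 in
set_option maxHeartbeats 10000000 in
theorem LB1 : ∀ e ∈ Dlit, IsAdmissible (build ![0,1,0,2,1,0,1] e) → ∃ B ∈ R, MatEquiv (build ![0,1,0,2,1,0,1] e) B := by decide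
set_option maxRecDepth 1000000 in
set_option maxHeartbeats 10000000 in
theorem LB2 : ∀ e ∈ Dlit, IsAdmissible (build ![0,1,2,1,0,1,2] e) → ∃ B ∈ R, MatEquiv (build ![0,1,2,1,0,1,2] e) B := by decide
set_option maxRecDepth 1000000 in
set_option maxHeartbeats 10000000 in
theorem LB3 : ∀ e ∈ Dlit, IsAdmissible (build ![0,2,0,1,0,2,0] e) → ∃ B ∈ R, MatEquiv (build ![0,2,0,1,0,2,0] e) B := by decide
set_option maxRecDepth 1000000 in
set_option maxHeartbeats 10000000 in
theorem LB4 : ∀ e ∈ Dlit, IsAdmissible (build ![0,2,0,1,2,0,2] e) → ∃ B ∈ R, MatEquiv (build ![0,2,0,1,2,0,2] e) B := by decide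
set_option maxRecDepth 1000000 in
set_option maxHeartbeats 10000000 in
theorem LB5 : ∀ e ∈ Dlit, IsAdmissible (build ![0,2,1,2,0,2,1] e) → ∃ B ∈ R, MatEquiv (build ![0,2,1,2,0,2,1] e) B := by decide
set_option maxRecDepth 1000000 in
set_option maxHeartbeats 10000000 in
theorem LB6 : ∀ e ∈ Dlit, IsAdmissible (build ![1,0,1,2,0,1,0] e) → ∃ B ∈ R, MatEquiv (build ![1,0,1,2,0,1,0] e) B := by decide
set_option maxRecDepth 1000000 in
set_option maxHeartbeats 10000000 in
theorem LB7 : ∀ e ∈ Dlit, IsAdmissible (build ![1,0,1,2,1,0,1] e) → ∃ B ∈ R, MatEquiv (build ![1,0,1,2,1,0,1] e) B := by decide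
set_option maxRecDepth 1000000 in
set_option maxHeartbeats 10000000 in
theorem LB8 : ∀ e ∈ Dlit, IsAdmissible (build ![1,0,2,0,1,0,2] e) → ∃ B ∈ R, MatEquiv (build ![1,0,2,0,1,0,2] e) B := by decide
set_option maxRecDepth 1000000 in
set_option maxHeartbeats 10000000 in
theorem LB9 : ∀ e ∈ Dlit, IsAdmissible (build ![1,2,0,2,1,2,0] e) → ∃ B ∈ R, MatEquiv (build ![1,2,0,2,1,2,0] e) B := by decide
set_option maxRecDepth 1000000 in
set_option maxHeartbeats 10000000 in
theorem LB10 : ∀ e ∈ Dlit, IsAdmissible (build ![1,2,1,0,1,2,1] e) → ∃ B ∈ R, MatEquiv (build ![1,2,1,0,1,2,1] e) B := by decide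
set_option maxRecDepth 1000000 in
set_option maxHeartbeats 10000000 in
theorem LB11 : ∀ e ∈ Dlit, IsAdmissible (build ![1,2,1,0,2,1,2] e) → ∃ B ∈ R, MatEquiv (build ![1,2,1,0,2,1,2] e) B := by decide
set_option maxRecDepth 1000000 in
set_option maxHeartbeats 10000000 in
theorem LB12 : ∀ e ∈ Dlit, IsAdmissible (build ![2,0,1,0,2,0,1] e) → ∃ B ∈ R, MatEquiv (build ![2,0,1,0,2,0,1] e) B := by decide
set_option maxRecDepth 1000000 in
set_option maxHeartbeats 10000000 in
theorem LB13 : ∀ e ∈ Dlit, IsAdmissible (build ![2,0,2,1,0,2,0] e) → ∃ B ∈ R, MatEquiv (build ![2,0,2,1,0,2,0] e) B := by decide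
set_option maxRecDepth 1000000 in
set_option maxHeartbeats 10000000 in
theorem LB14 : ∀ e ∈ Dlit, IsAdmissible (build ![2,0,2,1,2,0,2] e) → ∃ B ∈ R, MatEquiv (build ![2,0,2,1,2,0,2] e) B := by decide
set_option maxRecDepth 1000000 in
set_option maxHeartbeats 10000000 in
theorem LB15 : ∀ e ∈ Dlit, IsAdmissible (build ![2,1,0,1,2,1,0] e) → ∃ B ∈ R, MatEquiv (build ![2,1,0,1,2,1,0] e) B := by decide
set_option maxRecDepth 1000000 in
set_option maxHeartbeats 10000000 in
theorem LB16 : ∀ e ∈ Dlit, IsAdmissible (build ![2,1,2,0,1,2,1] e) → ∃ B ∈ R, MatEquiv (build ![2,1,2,0,1,2,1] e) B := by decide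
set_option maxRecDepth 1000000 in
set_option maxHeartbeats 10000000 in
theorem LB17 : ∀ e ∈ Dlit, IsAdmissible (build ![2,1,2,0,2,1,2] e) → ∃ B ∈ R, MatEquiv (build ![2,1,2,0,2,1,2] e) B := by decide

theorem LB : ∀ d ∈ Dlit, ∀ e ∈ Dlit, IsAdmissible (build d e) → ∃ B ∈ R, MatEquiv (build d e) B := by
  intro d hd
  fin_cases hd
  exacts [LB0, LB1, LB2, LB3, LB4, LB5, LB6, LB7, LB8, LB9, LB10, LB11, LB12, LB13, LB14, LB15, LB16, LB17]
set_option maxRecDepth 100000 in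
theorem Rcard : R.card = 13 := by decide

set_option maxRecDepth 1000000 in
set_option maxHeartbeats 4000000 in
theorem Radm : ∀ A ∈ R, IsAdmissible A := by decide

set_option maxRecDepth 1000000 in
set_option maxHeartbeats 4000000 in
theorem Rrigid : ∀ p ∈ R ×ˢ R, MatEquiv p.1 p.2 → p.1 = p.2 := by decide

theorem matEquiv_symm {A B : Fin 3 → Fin 16 → Bool} (h : MatEquiv A B) : MatEquiv B A := by
  obtain ⟨π, ε, h⟩ := h
  refine ⟨π⁻¹, fun r => ε (π⁻¹ r), fun r s => ?_⟩
  show A r s = xor (ε (π⁻¹ r)) (B (π⁻¹ r) s)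
  rw [h (π⁻¹ r) s, show π (π⁻¹ r) = r from π.apply_symm_apply r]
  cases ε (π⁻¹ r) <;> cases A r s <;> rfl

theorem matEquiv_trans {A B C : Fin 3 → Fin 16 → Bool} (h1 : MatEquiv A B)
    (h2 : MatEquiv B C) : MatEquiv A C := by
  obtain ⟨π, ε, h1⟩ := h1
  obtain ⟨σ, δ, h2⟩ := h2
  refine ⟨σ.trans π, fun r => xor (δ r) (ε (σ r)), fun r s => ?_⟩
  show C r s = xor (xor (δ r) (ε (σ r))) (A (π (σ r)) s)
  rw [h2 r s, h1 (σ r) s]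
  cases δ r <;> cases ε (σ r) <;> cases A (π (σ r)) s <;> rfl

theorem equiv_admissible {A B : Fin 3 → Fin 16 → Bool} (h : MatEquiv A B)
    (hA : IsAdmissible A) : IsAdmissible B := by
  obtain ⟨π, ε, h⟩ := h
  obtain ⟨hG, h7, hT⟩ := hA
  have hxorc : ∀ (c x y : Bool), xor c x = xor c y → x = y := by decide
  have hxorn : ∀ (c x y : Bool), (xor c x ≠ xor c y) ↔ x ≠ y := by decide
  have hblock : ∀ (i : Fin 2) r s, block3 B i r s = xor (ε r) (block3 A i (π r) s) :=
    fun i r s => h r _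
  refine ⟨fun i => ⟨?_, ?_⟩, fun r => ?_, ?_⟩
  · -- bijectivity
    refine (Fintype.bijective_iff_injective_and_card _).mpr ⟨?_, by decide⟩
    intro s t hst
    apply (hG i).1.injective
    funext r
    show block3 A i r s = block3 A i r t
    have h1 := congrFun hst (π.symm r)
    simp only [hblock] at h1
    have h2 := hxorc _ _ _ h1
    rwa [Equiv.apply_symm_apply] at h2
  · -- step counts
    intro s
    rw [show (Finset.univ.filter fun r : Fin 3 => block3 B i r s.castSucc ≠ block3 B i r s.succ)
        = Finset.univ.filter fun r : Fin 3 =>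
            block3 A i (π r) s.castSucc ≠ block3 A i (π r) s.succ from
      Finset.filter_congr fun r _ => by rw [hblock, hblock, hxorn]]
    rw [← (hG i).2 s]
    exact Finset.card_nbij (fun r => π r)
      (fun a ha => by simpa using (Finset.mem_filter.mp ha).2)
      (π.injective.injOn)
      (fun a ha => ⟨π.symm a, by simpa using (Finset.mem_filter.mp ha).2, by simp⟩)
  · rw [h r 7, h r 8, h7 (π r)]
  · have hrow : ∀ r, rowTrans16 B r = rowTrans16 A (π r) := by
      intro r
      unfold rowTrans16
      congr 1
      exact Finset.filter_congr fun p _ => by rw [h r p.1, h r p.2, hxorn]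
    calc Multiset.map (rowTrans16 B) Finset.univ.val
        = Multiset.map (fun r => rowTrans16 A (π r)) Finset.univ.val :=
          Multiset.map_congr rfl fun r _ => hrow r
      _ = Multiset.map (rowTrans16 A) (Multiset.map π Finset.univ.val) :=
          (Multiset.map_map _ _ _).symm
      _ = Multiset.map (rowTrans16 A) Finset.univ.val := by
          congr 1
          have : Finset.map π.toEmbedding Finset.univ = Finset.univ := Finset.map_univ_equiv π
          simpa [Finset.map_val] using congrArg Finset.val this
      _ = _ := hT
theorem pathN_xor (v : Fin 3 → Bool) (dd : ℕ → Fin 3) (n : ℕ) (r : Fin 3) :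
    pathN v dd n r = xor (v r) (pathN z3 dd n r) := by
  induction n with
  | zero => simp [pathN, z3]
  | succ m ih =>
    simp only [pathN]
    rw [ih]
    cases v r <;> cases pathN z3 dd m r <;> by_cases h : r = dd m <;> simp [h]

theorem reconstruct {A : Fin 3 → Fin 16 → Bool} (hA : IsAdmissible A)
    (h0 : ∀ r, A r 0 = false) :
    ∃ d e : Fin 7 → Fin 3, Function.Injective (col1 d) ∧ Function.Injective (col1 e) ∧
      A = build d e := by
  obtain ⟨hG, h7, _⟩ := hA
  have hstep : ∀ (i : Fin 2) (s : Fin 7), ∃ a : Fin 3, ∀ r,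
      (block3 A i r s.castSucc ≠ block3 A i r s.succ) ↔ r = a := by
    intro i s
    obtain ⟨a, ha⟩ := Finset.card_eq_one.mp ((hG i).2 s)
    refine ⟨a, fun r => ⟨fun hne => ?_, fun hr => ?_⟩⟩
    · have hm : r ∈ Finset.univ.filter
          (fun r : Fin 3 => block3 A i r s.castSucc ≠ block3 A i r s.succ) :=
        Finset.mem_filter.mpr ⟨Finset.mem_univ r, hne⟩
      rw [ha] at hm
      exact Finset.mem_singleton.mp hm
    · subst hr
      have hm : r ∈ ({r} : Finset (Fin 3)) := Finset.mem_singleton_self r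
      rw [← ha] at hm
      exact (Finset.mem_filter.mp hm).2
  choose d hd using hstep
  have hsucc : ∀ (i : Fin 2) (s : Fin 7) (r : Fin 3),
      block3 A i r s.succ =
        if r = d i s then !(block3 A i r s.castSucc) else block3 A i r s.castSucc := by
    intro i s r
    by_cases hr : r = d i s
    · have hne := (hd i s r).mpr hr
      rw [if_pos hr]
      revert hne
      cases block3 A i r s.castSucc <;> cases block3 A i r s.succ <;> simp
    · have heq : ¬(block3 A i r s.castSucc ≠ block3 A i r s.succ) :=
        fun hne => hr ((hd i s r).mp hne)
      rw [if_neg hr]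
      exact (not_ne_iff.mp heq).symm
  have hcol : ∀ (i : Fin 2) (n : ℕ) (h : n < 8) (r : Fin 3),
      block3 A i r ⟨n, h⟩ =
        pathN (fun r' => block3 A i r' ⟨0, by omega⟩) (ext7 (d i)) n r := by
    intro i n
    induction n with
    | zero => intro h r; rfl
    | succ m ih =>
      intro h r
      have hm7 : m < 7 := by omega
      have h8 : m < 8 := by omega
      have hsu : (⟨m+1, h⟩ : Fin 8) = (⟨m, hm7⟩ : Fin 7).succ := rfl
      have hcast : (⟨m, hm7⟩ : Fin 7).castSucc = (⟨m, h8⟩ : Fin 8) := rfl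
      rw [hsu, hsucc i ⟨m, hm7⟩ r, hcast]
      show _ = pathN _ (ext7 (d i)) (m+1) r
      simp only [pathN]
      rw [show ext7 (d i) m = d i ⟨m, hm7⟩ from dif_pos hm7]
      rw [← ih h8 r]
  have hv0 : (fun r' => block3 A 0 r' ⟨0, by omega⟩) = z3 := by
    funext r
    exact h0 r
  have hv1 : (fun r' => block3 A 1 r' ⟨0, by omega⟩) = pathN z3 (ext7 (d 0)) 7 := by
    funext r
    show A r ⟨8, by omega⟩ = _
    have h78 : A r ⟨8, by omega⟩ = A r 7 := (h7 r).symm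
    rw [h78]
    show block3 A 0 r ⟨7, by omega⟩ = _
    rw [hcol 0 7 (by omega) r, hv0]
  have hc1 : ∀ s : Fin 8, (fun r => block3 A 0 r s) = col1 (d 0) s := by
    intro s
    funext r
    rw [show block3 A 0 r s = block3 A 0 r ⟨s.val, s.isLt⟩ from rfl,
      hcol 0 s.val s.isLt r, hv0]
    rfl
  have hc2 : ∀ s : Fin 8,
      (fun r => block3 A 1 r s) = fun r => xor (pathN z3 (ext7 (d 0)) 7 r) (col1 (d 1) s r) := by
    intro s
    funext r
    rw [show block3 A 1 r s = block3 A 1 r ⟨s.val, s.isLt⟩ from rfl,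
      hcol 1 s.val s.isLt r, hv1, pathN_xor]
    rfl
  refine ⟨d 0, d 1, ?_, ?_, ?_⟩
  · intro s t hst
    apply (hG 0).1.injective
    show (fun r => block3 A 0 r s) = (fun r => block3 A 0 r t)
    rw [hc1 s, hc1 t, hst]
  · intro s t hst
    apply (hG 1).1.injective
    show (fun r => block3 A 1 r s) = (fun r => block3 A 1 r t)
    rw [hc2 s, hc2 t, hst]
  · funext r s
    by_cases hs : s.val < 8
    · simp only [build, if_pos hs]
      have hAs : A r s = block3 A 0 r ⟨s.val, hs⟩ := by
        show A r s = A r ⟨8 * 0 + s.val, by omega⟩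
        congr 1
        apply Fin.ext
        simp
      rw [hAs, hcol 0 s.val hs r, hv0]
    · have hm : s.val - 8 < 8 := by omega
      simp only [build, if_neg hs]
      have hsm : A r s = block3 A 1 r ⟨s.val - 8, hm⟩ := by
        show A r s = A r ⟨8 * 1 + (s.val - 8), by omega⟩
        congr 1
        apply Fin.ext
        show s.val = 8 * 1 + (s.val - 8)
        omega
      rw [hsm, hcol 1 (s.val - 8) hm r, hv1]

/-- There are exactly `13` equivalence classes of `3 × 16` binary matrices
`A = (A₁, A₂)` with `A₁, A₂` 3-bit Gray codes, the last column of `A₁` equal to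
the first column of `A₂`, and row transition-count multiset `{5,5,4}`. -/
theorem thirteen_classes :
    ∃ R : Finset (Fin 3 → Fin 16 → Bool),
      R.card = 13 ∧
      (∀ A ∈ R, IsAdmissible A) ∧
      ∀ A : Fin 3 → Fin 16 → Bool, IsAdmissible A →
        ∃! B, B ∈ R ∧ MatEquiv A B := by
  refine ⟨R, Rcard, Radm, ?_⟩
  intro A hA
  have hEq : MatEquiv A (fun r s => xor (A r 0) (A r s)) :=
    ⟨Equiv.refl (Fin 3), fun r => A r 0, fun _ _ => rfl⟩
  have hA'adm : IsAdmissible (fun r s => xor (A r 0) (A r s)) := equiv_admissible hEq hA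
  have h0 : ∀ r, xor (A r 0) (A r 0) = false := fun r => Bool.xor_self _
  obtain ⟨d, e, hinjd, hinje, hbe⟩ := reconstruct hA'adm h0
  have hveq : ∀ f : Fin 7 → Fin 3, ![f 0, f 1, f 2, f 3, f 4, f 5, f 6] = f := by
    intro f
    funext i
    fin_cases i <;> rfl
  have hd : d ∈ Dlit := by
    have h1 := LA (d 0) (d 1) (d 2) (d 3) (d 4) (d 5) (d 6)
    rw [hveq d] at h1
    exact h1 hinjd
  have he : e ∈ Dlit := by
    have h1 := LA (e 0) (e 1) (e 2) (e 3) (e 4) (e 5) (e 6)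
    rw [hveq e] at h1
    exact h1 hinje
  have hadm : IsAdmissible (build d e) := hbe ▸ hA'adm
  obtain ⟨B, hBR, hBeq⟩ := LB d hd e he hadm
  have hA'B : MatEquiv (fun r s => xor (A r 0) (A r s)) B := hbe ▸ hBeq
  have hAB : MatEquiv A B := matEquiv_trans hEq hA'B
  refine ⟨B, ⟨hBR, hAB⟩, ?_⟩
  rintro B' ⟨hB'R, hAB'⟩
  exact Rrigid (B', B) (Finset.mem_product.mpr ⟨hB'R, hBR⟩)
    (matEquiv_trans (matEquiv_symm hAB') hAB)
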